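/- Let ν ∈ ℝ⁴ be a unit vector. Then for all V, W ∈ ℝ⁴ orthogonal to ν, ω₀(V, W) = ⟪V, j·ν⟫·⟪W, k·ν⟫ − ⟪V, k·ν⟫·⟪W, j·ν⟫. In particular, for any 2-dimensional subspace F contained in ν^⊥ on which ω₀ is nondegenerate, the quaternionic trivialization τ_F(V) = (⟪V, j·ν⟫, ⟪V, k·ν⟫) is an isomorphism of symplectic vector spaces from (F, ω₀|_F) to ℝ² with its standard area form. (Lemma 2.16 of the paper.) -/

import Mathlib

open RealInnerProductSpace

/-- The standard complex structure on ℝ⁴: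
`i(x₁,x₂,y₁,y₂) = (−y₁,−y₂,x₁,x₂)`. -/
def Imap (v : EuclideanSpace ℝ (Fin 4)) : EuclideanSpace ℝ (Fin 4) :=
  WithLp.toLp 2 ![-(v 2), -(v 3), v 0, v 1]

/-- The quaternion `j` acting on ℝ⁴: `j(x₁,x₂,y₁,y₂) = (−x₂,x₁,y₂,−y₁)`. -/
def Jmap (v : EuclideanSpace ℝ (Fin 4)) : EuclideanSpace ℝ (Fin 4) :=
  WithLp.toLp 2 ![-(v 1), v 0, v 3, -(v 2)]

/-- The quaternion `k` acting on ℝ⁴: `k(x₁,x₂,y₁,y₂) = (−y₂,y₁,−x₂,x₁)`. -/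
def Kmap (v : EuclideanSpace ℝ (Fin 4)) : EuclideanSpace ℝ (Fin 4) :=
  WithLp.toLp 2 ![-(v 3), v 2, -(v 1), v 0]

/-- The standard symplectic form on ℝ⁴: `ω₀(u,v) = ⟪i·u, v⟫`. -/
noncomputable def omega0 (u v : EuclideanSpace ℝ (Fin 4)) : ℝ := ⟪Imap u, v⟫

lemma omega_key (ν : EuclideanSpace ℝ (Fin 4)) (hν : ‖ν‖ = 1)
    (V W : EuclideanSpace ℝ (Fin 4)) (hV : ⟪V, ν⟫ = 0) (hW : ⟪W, ν⟫ = 0) :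
    omega0 V W = ⟪V, Jmap ν⟫ * ⟪W, Kmap ν⟫ - ⟪V, Kmap ν⟫ * ⟪W, Jmap ν⟫ := by
  have hn : ⟪ν, ν⟫ = 1 := by
    rw [real_inner_self_eq_norm_sq, hν]; norm_num
  simp only [omega0, Imap, Jmap, Kmap, PiLp.toLp_apply, PiLp.inner_apply, RCLike.inner_apply, conj_trivial,
    Fin.sum_univ_four, Matrix.cons_val_zero, Matrix.cons_val_one, Matrix.head_cons,
    Matrix.cons_val_two, Matrix.tail_cons, Matrix.cons_val_three] at hn hV hW ⊢
  linear_combination ((V 2 * W 0) + V 3 * W 1 - V 0 * W 2 - V 1 * W 3) * hn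
    - (-(W 2) * ν 0 - W 3 * ν 1 + W 0 * ν 2 + W 1 * ν 3) * hV
    + (-(V 2) * ν 0 - V 3 * ν 1 + V 0 * ν 2 + V 1 * ν 3) * hW


/-- Lemma 2.16: for a unit vector `ν ∈ ℝ⁴` and `V, W ⊥ ν`, one has
`ω₀(V, W) = ⟪V, jν⟫⟪W, kν⟫ − ⟪V, kν⟫⟪W, jν⟫`.  In particular, on any
2-dimensional subspace `F ⊆ ν^⊥` on which `ω₀` is nondegenerate, the quaternionic
trivialization `τ_F(V) = (⟪V, jν⟫, ⟪V, kν⟫)` is an isomorphism of symplectic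
vector spaces onto `ℝ²` with its standard area form. -/
theorem quaternionic_trivialization_symplectic
    (ν : EuclideanSpace ℝ (Fin 4)) (hν : ‖ν‖ = 1) :
    (∀ V W : EuclideanSpace ℝ (Fin 4), ⟪V, ν⟫ = 0 → ⟪W, ν⟫ = 0 →
      omega0 V W = ⟪V, Jmap ν⟫ * ⟪W, Kmap ν⟫ - ⟪V, Kmap ν⟫ * ⟪W, Jmap ν⟫) ∧
    (∀ F : Submodule ℝ (EuclideanSpace ℝ (Fin 4)),
      (∀ V ∈ F, ⟪V, ν⟫ = 0) → Module.finrank ℝ F = 2 →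
      (∃ u ∈ F, ∃ v ∈ F, omega0 u v ≠ 0) →
      Function.Bijective (fun V : F =>
        ((⟪(V : EuclideanSpace ℝ (Fin 4)), Jmap ν⟫,
          ⟪(V : EuclideanSpace ℝ (Fin 4)), Kmap ν⟫) : ℝ × ℝ))) := by
  refine ⟨omega_key ν hν, ?_⟩
  rintro F hF hrank ⟨u, hu, v, hv, hne⟩
  let τ : F →ₗ[ℝ] ℝ × ℝ :=
  { toFun := fun V => (⟪(V : EuclideanSpace ℝ (Fin 4)), Jmap ν⟫,
      ⟪(V : EuclideanSpace ℝ (Fin 4)), Kmap ν⟫)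
    map_add' := by intro a b; simp [inner_add_left]
    map_smul' := by intro c a; simp [inner_smul_left] }
  have hd := omega_key ν hν u v (hF u hu) (hF v hv)
  have hsurj : Function.Surjective τ := by
    intro p
    set e := omega0 u v with he
    refine ⟨⟨((p.1 * ⟪v, Kmap ν⟫ - p.2 * ⟪v, Jmap ν⟫) / e) • u
        + ((⟪u, Jmap ν⟫ * p.2 - ⟪u, Kmap ν⟫ * p.1) / e) • v,
        F.add_mem (F.smul_mem _ hu) (F.smul_mem _ hv)⟩, ?_⟩
    simp only [τ, LinearMap.coe_mk, AddHom.coe_mk, inner_add_left, inner_smul_left,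
      conj_trivial]
    set uj := ⟪u, Jmap ν⟫; set uk := ⟪u, Kmap ν⟫
    set vj := ⟪v, Jmap ν⟫; set vk := ⟪v, Kmap ν⟫
    refine Prod.ext ?_ ?_ <;> field_simp
    · linear_combination -p.1 * hd
    · linear_combination -p.2 * hd
  have hinj : Function.Injective τ :=
    (LinearMap.injective_iff_surjective_of_finrank_eq_finrank
      (by simp [hrank])).mpr hsurj
  exact ⟨hinj, hsurj⟩
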